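/- For every integer d ≥ 2, the vector δ_d ∈ ℤ^n whose first k−d−1 coordinates equal d, whose next d+1 coordinates (positions k−d through k) equal d−1, whose next d+1 coordinates (positions k+1 through k+d+1) equal 1, and whose remaining coordinates equal 0, is a real root of degree d: δ_d ∈ W·β and deg(δ_d) = d. -/

import Mathlib

open Finset

/-- `stdE n m` is the standard basis vector `e_m` (1-based index `m`) of `ℚ^n`. -/
def stdE (n m : ℕ) : Fin n → ℚ := fun j => if (j : ℕ) + 1 = m then 1 else 0

/-- the simple root `α_i = e_{i+1} - e_i` (1-based, for `1 ≤ i ≤ n-1`). -/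
def alphaRoot (n i : ℕ) : Fin n → ℚ := stdE n (i + 1) - stdE n i

/-- the simple root `β = e_1 + ⋯ + e_k`. -/
def betaRoot (n k : ℕ) : Fin n → ℚ := fun j => if (j : ℕ) < k then 1 else 0

/-- the quadratic form `q(x) = Σ x_i² + ((2-k)/k²)(Σ x_i)²`. -/
def qform (n k : ℕ) (x : Fin n → ℚ) : ℚ :=
  (∑ i, (x i) ^ 2) + ((2 - (k : ℚ)) / (k : ℚ) ^ 2) * (∑ i, x i) ^ 2

/-- the inner product obtained as the polarization of `q`. -/
def ip (n k : ℕ) (x y : Fin n → ℚ) : ℚ :=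
  (qform n k (x + y) - qform n k x - qform n k y) / 2

/-- the degree `deg(x) = (x_1 + ⋯ + x_n)/k`. -/
def degv (n k : ℕ) (x : Fin n → ℚ) : ℚ := (∑ i, x i) / (k : ℚ)

/-- `r(x) = x_{k+1} + ⋯ + x_n - 2 deg(x)`. -/
def rco (n k : ℕ) (x : Fin n → ℚ) : ℚ :=
  (∑ i ∈ Finset.univ.filter (fun i : Fin n => k ≤ (i : ℕ)), x i) - 2 * degv n k x

/-- the reflection `s_β : x ↦ x + r(x)·β`. -/
def sBeta (n k : ℕ) (x : Fin n → ℚ) : Fin n → ℚ := x + rco n k x • betaRoot n k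

/-- the map swapping coordinates `a` and `b` (0-based). -/
def sSwap (n : ℕ) (a b : Fin n) (x : Fin n → ℚ) : Fin n → ℚ := x ∘ Equiv.swap a b

/-- The Weyl group: the subgroup of bijections of `ℚ^n` generated by the simple
reflections `s_1, …, s_{n-1}` (as functions: `sSwap` of adjacent coordinates,
0-based) and `s_β` (as a function: `sBeta`). -/
def weyl (n k : ℕ) : Subgroup (Equiv.Perm (Fin n → ℚ)) :=
  Subgroup.closure
    {σ | ⇑σ = sBeta n k ∨ ∃ a b : Fin n, (a : ℕ) + 1 = (b : ℕ) ∧ ⇑σ = sSwap n a b}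

/-- The set of real roots: the orbit `W·β`. -/
def realRoots (n k : ℕ) : Set (Fin n → ℚ) :=
  {x | ∃ σ ∈ weyl n k, σ (betaRoot n k) = x}

/-- `dec x`: the coordinates of `x` rearranged in weakly decreasing order. -/
def dec {n : ℕ} (x : Fin n → ℚ) : Fin n → ℚ := fun i => x (Tuple.sort x i.rev)

/-- The root `δ_d`: first `k-d-1` coordinates equal `d`, coordinates `k-d` through `k`
equal `d-1`, coordinates `k+1` through `k+d+1` equal `1`, the rest are `0`
(1-based positions). -/
def deltaRoot (n k d : ℕ) : Fin n → ℚ := fun j =>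
  if (j : ℕ) + 1 ≤ k - (d + 1) then (d : ℚ)
  else if (j : ℕ) + 1 ≤ k then (d : ℚ) - 1
  else if (j : ℕ) + 1 ≤ k + d + 1 then 1 else 0

/- ---------------- auxiliary material ---------------- -/

lemma sum_indicator (n a : ℕ) (ha : a ≤ n) :
    ∑ i : Fin n, (if (i : ℕ) < a then (1 : ℚ) else 0) = a := by
  rw [Finset.sum_boole]
  congr 1
  have : Finset.univ.filter (fun i : Fin n => (i : ℕ) < a)
      = (Finset.range a).attachFin (fun m hm => lt_of_lt_of_le (Finset.mem_range.mp hm) ha) := by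
    ext i
    simp [Finset.mem_attachFin]
  rw [this, Finset.card_attachFin, Finset.card_range]

/-- the action of `Perm (Fin n)` on `ℚ^n` by permuting coordinates. -/
def permAct (n : ℕ) : Equiv.Perm (Fin n) →* Equiv.Perm (Fin n → ℚ) where
  toFun σ := Equiv.arrowCongr σ (Equiv.refl ℚ)
  map_one' := by ext f x; simp; rfl
  map_mul' σ τ := by ext f x; simp [Equiv.Perm.mul_def, Equiv.symm_trans_apply]

lemma permAct_apply (n : ℕ) (σ : Equiv.Perm (Fin n)) (f : Fin n → ℚ) (x : Fin n) :
    permAct n σ f x = f (σ.symm x) := rfl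

lemma permAct_mem (n k : ℕ) (σ : Equiv.Perm (Fin n)) : permAct n σ ∈ weyl n k := by
  rcases n with _ | m
  · have : σ = 1 := by
      ext i; exact i.elim0
    rw [this, map_one]
    exact one_mem _
  · have hσ : σ ∈ Submonoid.closure
        (Set.range fun i : Fin m ↦ Equiv.swap i.castSucc i.succ) := by
      rw [Equiv.Perm.mclosure_swap_castSucc_succ]; trivial
    induction hσ using Submonoid.closure_induction with
    | mem x hx =>
      obtain ⟨i, rfl⟩ := hx
      apply Subgroup.subset_closure
      refine Or.inr ⟨i.castSucc, i.succ, by simp, ?_⟩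
      funext f
      simp only [sSwap]
      have : (permAct (m + 1) (Equiv.swap i.castSucc i.succ)) f
          = f ∘ (Equiv.swap i.castSucc i.succ).symm := rfl
      rw [this, Equiv.symm_swap]
    | one => rw [map_one]; exact one_mem _
    | mul x y hx hy hpx hpy => rw [map_mul]; exact mul_mem hpx hpy

lemma sum_betaRoot (n k : ℕ) (hkn : k ≤ n) : ∑ i, betaRoot n k i = (k : ℚ) := by
  simpa [betaRoot] using sum_indicator n k hkn

lemma filter_sum_betaRoot (n k : ℕ) :
    ∑ i ∈ Finset.univ.filter (fun i : Fin n => k ≤ (i : ℕ)), betaRoot n k i = 0 := by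
  apply Finset.sum_eq_zero
  intro i hi
  simp only [Finset.mem_filter] at hi
  simp only [betaRoot, if_neg (by omega : ¬ (i : ℕ) < k)]

lemma rco_add_smul (n k : ℕ) (hk0 : 0 < k) (hkn : k ≤ n) (x : Fin n → ℚ) (c : ℚ) :
    rco n k (x + c • betaRoot n k) = rco n k x - 2 * c := by
  have hk' : (k : ℚ) ≠ 0 := by positivity
  simp only [rco, degv, Pi.add_apply, Pi.smul_apply, smul_eq_mul, Finset.sum_add_distrib,
    ← Finset.mul_sum, filter_sum_betaRoot, sum_betaRoot n k hkn]
  field_simp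
  ring

lemma sBeta_involutive (n k : ℕ) (hk0 : 0 < k) (hkn : k ≤ n) :
    Function.Involutive (sBeta n k) := by
  intro x
  simp only [sBeta, rco_add_smul n k hk0 hkn]
  funext j
  simp only [Pi.add_apply, Pi.smul_apply, smul_eq_mul]
  ring

/-- the underlying map (on 0-based indices) of a permutation exchanging the
block `[k-d-1, k-1]` with the block `[k, k+d]`. -/
def gnat (k d : ℕ) : ℕ → ℕ := fun m =>
  if k - (d + 1) ≤ m ∧ m < k then m + (d + 1)
  else if k ≤ m ∧ m < k + d + 1 then m - (d + 1) else m

lemma gnat_gnat (k d : ℕ) (hk : d + 1 ≤ k) (m : ℕ) : gnat k d (gnat k d m) = m := by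
  unfold gnat
  split_ifs <;> omega

/-- the permutation of `Fin n` exchanging the two blocks. -/
def tauPerm (n k d : ℕ) (hk : d + 1 ≤ k) (hn : k + d + 1 ≤ n) : Equiv.Perm (Fin n) :=
  Function.Involutive.toPerm
    (fun j => ⟨gnat k d j, by
      have := j.isLt
      unfold gnat
      split_ifs <;> omega⟩)
    (fun j => by
      apply Fin.ext
      exact gnat_gnat k d hk j)

theorem deltaRoot_is_real_root (n k d : ℕ) (hd : 2 ≤ d) (hk : d + 1 ≤ k)
    (hn : k + d + 1 ≤ n) :
    deltaRoot n k d ∈ realRoots n k ∧ degv n k (deltaRoot n k d) = (d : ℚ) := by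
  have hk0 : 0 < k := by omega
  have hkn : k ≤ n := by omega
  have hkQ : (k : ℚ) ≠ 0 := by positivity
  set τ := tauPerm n k d hk hn with hτ
  set B := permAct n τ (betaRoot n k) with hBdef
  -- pointwise formula for B
  have hB : ∀ j : Fin n, B j = if gnat k d (j : ℕ) < k then (1 : ℚ) else 0 := by
    intro j
    rw [hBdef, permAct_apply]
    have hsymm : τ.symm j = (⟨gnat k d j, by
        have := j.isLt
        unfold gnat
        split_ifs <;> omega⟩ : Fin n) := by
      rw [hτ]
      rfl
    rw [hsymm]
    rfl
  -- decomposition of B into indicators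
  have hBdec : ∀ j : Fin n, B j =
      (if (j : ℕ) < k + d + 1 then (1 : ℚ) else 0)
      - (if (j : ℕ) < k then 1 else 0)
      + (if (j : ℕ) < k - (d + 1) then 1 else 0) := by
    intro j
    rw [hB j]
    unfold gnat
    split_ifs <;> first | omega | norm_num
  have hsumB : ∑ i, B i = (k : ℚ) := by
    calc ∑ i, B i
        = ∑ i : Fin n, ((if (i : ℕ) < k + d + 1 then (1 : ℚ) else 0)
            - (if (i : ℕ) < k then 1 else 0)
            + (if (i : ℕ) < k - (d + 1) then 1 else 0)) :=
          Finset.sum_congr rfl (fun i _ => hBdec i)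
      _ = (↑(k + d + 1) : ℚ) - ↑k + ↑(k - (d + 1)) := by
          rw [Finset.sum_add_distrib, Finset.sum_sub_distrib,
            sum_indicator n (k + d + 1) hn, sum_indicator n k hkn,
            sum_indicator n (k - (d + 1)) (by omega)]
      _ = (k : ℚ) := by
          rw [Nat.cast_sub (by omega)]
          push_cast
          ring
  have hpart : ∑ i ∈ Finset.univ.filter (fun i : Fin n => k ≤ (i : ℕ)), B i
      = (d : ℚ) + 1 := by
    rw [Finset.sum_filter]
    calc ∑ i : Fin n, (if k ≤ (i : ℕ) then B i else 0)
        = ∑ i : Fin n, ((if (i : ℕ) < k + d + 1 then (1 : ℚ) else 0)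
            - (if (i : ℕ) < k then 1 else 0)) := by
          refine Finset.sum_congr rfl (fun i _ => ?_)
          rw [hBdec i]
          split_ifs <;> first | omega | norm_num
      _ = (↑(k + d + 1) : ℚ) - ↑k := by
          rw [Finset.sum_sub_distrib, sum_indicator n (k + d + 1) hn,
            sum_indicator n k hkn]
      _ = (d : ℚ) + 1 := by push_cast; ring
  have hr : rco n k B = (d : ℚ) - 1 := by
    rw [rco, degv, hpart, hsumB]
    field_simp
    ring
  have hfinal : sBeta n k B = deltaRoot n k d := by
    funext j
    simp only [sBeta, Pi.add_apply, Pi.smul_apply, smul_eq_mul, hr, hBdec j,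
      betaRoot, deltaRoot]
    split_ifs <;> first | omega | ring1
  constructor
  · refine ⟨(sBeta_involutive n k hk0 hkn).toPerm (sBeta n k) * permAct n τ,
      mul_mem ?_ (permAct_mem n k τ), ?_⟩
    · exact Subgroup.subset_closure (Or.inl rfl)
    · rw [Equiv.Perm.mul_apply]
      exact hfinal
  · rw [← hfinal]
    rw [degv]
    have : ∑ i, sBeta n k B i = ∑ i, B i + rco n k B * ∑ i, betaRoot n k i := by
      simp only [sBeta, Pi.add_apply, Pi.smul_apply, smul_eq_mul,
        Finset.sum_add_distrib, Finset.mul_sum]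
    rw [this, hsumB, hr, sum_betaRoot n k hkn]
    field_simp
    ring
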